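/- Let G be a finite simple graph on N vertices with degrees d_1, …, d_N and average degree d̄ = (1/N)·Σ_i d_i > 0. Then every unit eigenvector u of the adjacency matrix A with eigenvalue ε < 0 satisfies (𝟙ᵀu)² ≤ (Σ_{i=1}^N (d_i − d̄)²)/d̄² = N·δ_rms², where δ_rms = ((1/N)·Σ_i (d_i − d̄)²)^{1/2}/d̄. -/

import Mathlib

/-- Degree-variance control of the negative-mode uniform overlap: for a
finite simple graph `G` with degrees `d i`, positive average degree `d̄`, every unit
eigenvector `u` of the adjacency matrix with negative eigenvalue satisfies
`(𝟙ᵀ u)² ≤ (Σ_i (d_i - d̄)²)/d̄² = N δ_rms²`, where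
`δ_rms = ((1/N) Σ_i (d_i - d̄)²)^{1/2} / d̄`. -/
theorem stmt_8 {N : ℕ} (G : SimpleGraph (Fin N)) [DecidableRel G.Adj]
    (dbar : ℝ) (hdbar : dbar = (∑ i, (G.degree i : ℝ)) / N) (hdbar_pos : 0 < dbar)
    (δrms : ℝ)
    (hδ : δrms = Real.sqrt ((1 / (N : ℝ)) * ∑ i, ((G.degree i : ℝ) - dbar) ^ 2) / dbar)
    (u : Fin N → ℝ) (lam : ℝ)
    (hunit : ∑ i, (u i) ^ 2 = 1)
    (heig : (G.adjMatrix ℝ).mulVec u = lam • u)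
    (hneg : lam < 0) :
    (∑ i, u i) ^ 2 ≤ (∑ i, ((G.degree i : ℝ) - dbar) ^ 2) / dbar ^ 2 ∧
      (∑ i, ((G.degree i : ℝ) - dbar) ^ 2) / dbar ^ 2 = (N : ℝ) * δrms ^ 2 := by
  set s : ℝ := ∑ i, u i with hs
  have hN : 0 < (N : ℝ) := by
    rcases Nat.eq_zero_or_pos N with h | h
    · exfalso
      have h0 : ((N : ℝ)) = 0 := by exact_mod_cast h
      rw [hdbar, h0, div_zero] at hdbar_pos
      exact lt_irrefl _ hdbar_pos
    · exact_mod_cast h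
  -- row sums of the adjacency matrix are degrees
  have hrow : ∀ j : Fin N, ∑ i, G.adjMatrix ℝ j i = (G.degree j : ℝ) := by
    intro j
    simp [SimpleGraph.adjMatrix_apply, SimpleGraph.degree,
      SimpleGraph.neighborFinset_eq_filter, Finset.sum_boole]
  -- key identity : ∑ j, degree j * u j = lam * s
  have hkey : ∑ j, (G.degree j : ℝ) * u j = lam * s := by
    have h1 : ∑ i, ((G.adjMatrix ℝ).mulVec u) i = ∑ j, (G.degree j : ℝ) * u j := by
      simp only [Matrix.mulVec, dotProduct]
      rw [Finset.sum_comm]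
      refine Finset.sum_congr rfl fun j _ => ?_
      rw [← Finset.sum_mul]
      congr 1
      rw [← hrow j]
      exact Finset.sum_congr rfl fun i _ => by
        simp [SimpleGraph.adjMatrix_apply, G.adj_comm]
    have h2 : ∑ i, ((G.adjMatrix ℝ).mulVec u) i = lam * s := by
      rw [heig]
      simp [Finset.mul_sum, hs]
    rw [← h1, h2]
  -- hence (dbar - lam) * s = ∑ (d_j - dbar) u_j
  have hsum_d : ∑ j, (G.degree j : ℝ) = dbar * N := by
    rw [hdbar]; field_simp
  have hsplit : (lam - dbar) * s = ∑ j, ((G.degree j : ℝ) - dbar) * u j := by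
    have : ∑ j, ((G.degree j : ℝ) - dbar) * u j
        = (∑ j, (G.degree j : ℝ) * u j) - dbar * s := by
      rw [hs, Finset.mul_sum, ← Finset.sum_sub_distrib]
      exact Finset.sum_congr rfl fun j _ => by ring
    rw [this, hkey]; ring
  -- Cauchy–Schwarz
  have hCS : ((lam - dbar) * s) ^ 2 ≤ ∑ j, ((G.degree j : ℝ) - dbar) ^ 2 := by
    rw [hsplit]
    calc (∑ j, ((G.degree j : ℝ) - dbar) * u j) ^ 2
        ≤ (∑ j, ((G.degree j : ℝ) - dbar) ^ 2) * ∑ j, (u j) ^ 2 :=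
          Finset.sum_mul_sq_le_sq_mul_sq _ _ _
      _ = ∑ j, ((G.degree j : ℝ) - dbar) ^ 2 := by rw [hunit, mul_one]
  have hgap : dbar ^ 2 ≤ (lam - dbar) ^ 2 := by nlinarith
  have hmain : dbar ^ 2 * s ^ 2 ≤ ∑ j, ((G.degree j : ℝ) - dbar) ^ 2 := by
    have hs2 : 0 ≤ s ^ 2 := sq_nonneg s
    nlinarith [hCS]
  constructor
  · rw [le_div_iff₀ (by positivity : (0:ℝ) < dbar ^ 2)]
    nlinarith [hmain]
  · have hvar_nonneg : 0 ≤ (1 / (N : ℝ)) * ∑ i, ((G.degree i : ℝ) - dbar) ^ 2 := by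
      positivity
    rw [hδ, div_pow, Real.sq_sqrt hvar_nonneg]
    field_simp
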